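/- Suppose P' is a Gaussian transition kernel on R^d (and ℓ is the Lebesgue measure) and E is a compact subset of R^d with nonempty interior. Then there exists β(P') ∈ (0,1) such that for all m_0, m_0' ∈ P(E), ‖m_0 P' − m_0' P'‖_TV ≤ β(P') ‖m_0 − m_0'‖_TV. In other words, Assumption (AG) implies part (1) of Assumption (AP). -/

import Mathlib

noncomputable section

open MeasureTheory ProbabilityTheory Filter Real
open scoped ENNReal NNReal

/-- Euclidean state space `ℝ^d`. -/
abbrev Rd (d : ℕ) : Type := EuclideanSpace ℝ (Fin d)

variable {d : ℕ}

/-- A probability density with respect to a reference measure `ℓ`. -/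
def IsDensity (ℓ : Measure (Rd d)) (η : Rd d → ℝ) : Prop :=
  Measurable η ∧ (∀ x, 0 ≤ η x) ∧ ∫ x, η x ∂ℓ = 1

/-- A transition-kernel density with respect to `ℓ`. -/
def IsKernelDensity (ℓ : Measure (Rd d)) (p : Rd d → Rd d → ℝ) : Prop :=
  Measurable (Function.uncurry p) ∧ (∀ x y, 0 ≤ p x y) ∧ ∀ x, ∫ y, p x y ∂ℓ = 1

/-- Measurable functions bounded by one. -/
def B1 (S : Type*) [MeasurableSpace S] : Set (S → ℝ) :=
  {f | Measurable f ∧ ∀ x, |f x| ≤ 1}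

/-- Total-variation distance, as the supremum over `B1` test functions. -/
def tvDist {S : Type*} [MeasurableSpace S] (μ ν : Measure S) : ℝ :=
  ⨆ f : B1 S, |∫ x, (f : S → ℝ) x ∂μ - ∫ x, (f : S → ℝ) x ∂ν|

/-- Total-variation distance between densities. -/
def tvDen (ℓ : Measure (Rd d)) (g h : Rd d → ℝ) : ℝ := ∫ x, |g x - h x| ∂ℓ

/-- Sup-norm distance between densities. -/
def supDist (g h : Rd d → ℝ) : ℝ := ⨆ x, |g x - h x|

/-- The transition kernel `M^Ψ` driven by the potential field `Ψ`. -/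
def Mker {E : Set (Rd d)} (Q Q0 : Kernel E E) (lam : ℝ) (Ψ : Rd d → ℝ) (x : E) :
    Measure E :=
  (Q x).withDensity (fun y => ENNReal.ofReal (Real.exp (-(lam * max (Ψ x.1 - Ψ y.1) 0))))
    + ENNReal.ofReal (1 - ∫ z, Real.exp (-(lam * max (Ψ x.1 - Ψ z.1) 0)) ∂(Q x)) • Q0 x

/-- `m ↦ m M^Ψ`. -/
def mStep {E : Set (Rd d)} (Q Q0 : Kernel E E) (lam : ℝ) (Ψ : Rd d → ℝ)
    (m : Measure E) : Measure E :=
  m.bind (Mker Q Q0 lam Ψ)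

/-- The density of `η R_m`, where `R_m = (1-ε) P + ε m P'`. -/
def etaStep {E : Set (Rd d)} (ℓ : Measure (Rd d)) (p p' : Rd d → Rd d → ℝ) (ε : ℝ)
    (m : Measure E) (η : Rd d → ℝ) : Rd d → ℝ :=
  fun y => (1 - ε) * ∫ x, η x * p x y ∂ℓ + ε * ∫ x, p' x.1 y ∂m

/-- One step `Φ(m, η) = (m M^η, η R_m)` of the nonlinear dynamics. -/
def Phi {E : Set (Rd d)} (Q Q0 : Kernel E E) (lam : ℝ) (ℓ : Measure (Rd d))
    (p p' : Rd d → Rd d → ℝ) (ε : ℝ) :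
    Measure E × (Rd d → ℝ) → Measure E × (Rd d → ℝ) :=
  fun q => (mStep Q Q0 lam q.2 q.1, etaStep ℓ p p' ε q.1 q.2)

/-- Empirical measure of `N` points. -/
def empMeas {E : Set (Rd d)} {N : ℕ} (x : Fin N → E) : Measure E :=
  (N : ℝ≥0∞)⁻¹ • ∑ j, Measure.dirac (x j)

/-- The potential field sequence `η_k^N` generated by the `N`-particle system. -/
def etaSeq {E : Set (Rd d)} (ℓ : Measure (Rd d)) (p p' : Rd d → Rd d → ℝ) (ε : ℝ)
    {Ω : Type*} {N : ℕ} (X : ℕ → Ω → (Fin N → E)) (η0 : Rd d → ℝ) :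
    ℕ → Ω → Rd d → ℝ
  | 0 => fun _ => η0
  | k + 1 => fun ω => etaStep ℓ p p' ε (empMeas (X k ω)) (etaSeq ℓ p p' ε X η0 k ω)

/-- History filtration of a process. -/
def histF {Ω α : Type*} [MeasurableSpace α] (X : ℕ → Ω → α) (k : ℕ) :
    MeasurableSpace Ω :=
  ⨆ i : Fin (k + 1), MeasurableSpace.comap (X i.1) inferInstance

/-- The `N`-interacting-particle system: conditionally on the past, the particles
move independently according to `M^{η_k^N}`. -/
structure IsParticleSystem {E : Set (Rd d)} (Q Q0 : Kernel E E) (lam : ℝ)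
    (ℓ : Measure (Rd d)) (p p' : Rd d → Rd d → ℝ) (ε : ℝ) {N : ℕ}
    {Ω : Type*} [MeasurableSpace Ω] (Pr : Measure Ω)
    (X : ℕ → Ω → (Fin N → E)) (η0 : Rd d → ℝ) : Prop where
  prob : IsProbabilityMeasure Pr
  meas_X : ∀ k, Measurable (X k)
  density_η0 : IsDensity ℓ η0
  condLaw : ∀ (k : ℕ) (A : Set (Fin N → E)), MeasurableSet A →
    ∀ B : Set Ω, MeasurableSet[histF X k] B →
      (Pr (B ∩ X (k + 1) ⁻¹' A)).toReal =
        ∫ ω in B, ((Measure.pi fun j =>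
            Mker Q Q0 lam (etaSeq ℓ p p' ε X η0 k ω) (X k ω j)) A).toReal ∂Pr

/-- The potential field sequence `η̃_k^N` of the approximating particle scheme. -/
def etaTildeSeq {E : Set (Rd d)} (ℓ : Measure (Rd d)) (p p' : Rd d → Rd d → ℝ) (ε : ℝ)
    {Ω : Type*} {N : ℕ} (X : ℕ → Ω → (Fin N → E)) (Y : ℕ → Ω → (Fin N → Rd d))
    (η0 : Rd d → ℝ) : ℕ → Ω → Rd d → ℝ
  | 0 => fun _ => η0
  | k + 1 => fun ω y =>
      (1 - ε) * ((N : ℝ)⁻¹ * ∑ i, p (Y (k + 1) ω i) y)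
        + ε * ((N : ℝ)⁻¹ * ∑ j, p' (X k ω j).1 y)

/-- The approximating particle scheme: `X̃` are the particles, `Y` the auxiliary
samples used to approximate the potential field. -/
structure IsSchemeSystem {E : Set (Rd d)} (Q Q0 : Kernel E E) (lam : ℝ)
    (ℓ : Measure (Rd d)) (p p' : Rd d → Rd d → ℝ) (ε : ℝ)
    (m0 : Measure E) (η0 : Rd d → ℝ) {N : ℕ}
    {Ω : Type*} [MeasurableSpace Ω] (Pr : Measure Ω)
    (X : ℕ → Ω → (Fin N → E)) (Y : ℕ → Ω → (Fin N → Rd d)) : Prop where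
  prob : IsProbabilityMeasure Pr
  meas_X : ∀ k, Measurable (X k)
  meas_Y : ∀ k, Measurable (Y k)
  init_indep : iIndepFun (fun i ω => X 0 ω i) Pr
  init_law : ∀ i, Pr.map (fun ω => X 0 ω i) = m0
  condLaw : ∀ (k : ℕ) (A : Set ((Fin N → E) × (Fin N → Rd d))), MeasurableSet A →
    ∀ B : Set Ω, MeasurableSet[histF X k ⊔ histF Y k] B →
      (Pr (B ∩ (fun ω => (X (k + 1) ω, Y (k + 1) ω)) ⁻¹' A)).toReal =
        ∫ ω in B,
          (((Measure.pi fun j =>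
              Mker Q Q0 lam (etaTildeSeq ℓ p p' ε X Y η0 k ω) (X k ω j)).prod
            (Measure.pi fun _ : Fin N =>
              ℓ.withDensity fun x =>
                ENNReal.ofReal (etaTildeSeq ℓ p p' ε X Y η0 k ω x))) A).toReal ∂Pr

/-- An (isotropic) Gaussian transition-kernel density on `ℝ^d`. -/
def IsGaussianKernelDensity (p : Rd d → Rd d → ℝ) : Prop :=
  ∃ σ : ℝ, 0 < σ ∧ ∀ x y,
    p x y = (2 * Real.pi * σ ^ 2) ^ (-(d : ℝ) / 2) * Real.exp (-‖y - x‖ ^ 2 / (2 * σ ^ 2))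

/-- The measure `m P'` on `ℝ^d` (density formulation). -/
def measP' {E : Set (Rd d)} (ℓ : Measure (Rd d)) (p' : Rd d → Rd d → ℝ) (m : Measure E) :
    Measure (Rd d) :=
  ℓ.withDensity fun y => ENNReal.ofReal (∫ x, p' x.1 y ∂m)

/-- Distance on pairs `(m, η)`: TV distance plus TV distance of densities. -/
def pairDist {E : Set (Rd d)} (ℓ : Measure (Rd d)) (q q' : Measure E × (Rd d → ℝ)) : ℝ :=
  tvDist q.1 q'.1 + tvDen ℓ q.2 q'.2

/-- `Φ` has a unique fixed point in `P(E) × P*(ℝ^d)` (identifying measures having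
densities with their densities, hence up to `ℓ`-a.e. equality in the second coordinate). -/
def UniqueFixedPointProp {E : Set (Rd d)} (Q Q0 : Kernel E E) (lam : ℝ)
    (ℓ : Measure (Rd d)) (p p' : Rd d → Rd d → ℝ) (ε : ℝ) : Prop :=
  ∃ q : Measure E × (Rd d → ℝ),
    (IsProbabilityMeasure q.1 ∧ IsDensity ℓ q.2) ∧
    mStep Q Q0 lam q.2 q.1 = q.1 ∧ etaStep ℓ p p' ε q.1 q.2 =ᵐ[ℓ] q.2 ∧
    ∀ q' : Measure E × (Rd d → ℝ),
      (IsProbabilityMeasure q'.1 ∧ IsDensity ℓ q'.2) →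
      mStep Q Q0 lam q'.2 q'.1 = q'.1 → etaStep ℓ p p' ε q'.1 q'.2 =ᵐ[ℓ] q'.2 →
      q'.1 = q.1 ∧ q'.2 =ᵐ[ℓ] q.2

/-- `sup_{f ∈ B1(E)} E(|⟨m_n^N - q.1, f⟩| + ‖η_n^N - q.2‖_TV)` for the particle system. -/
def particleErr {E : Set (Rd d)} (ℓ : Measure (Rd d)) (p p' : Rd d → Rd d → ℝ) (ε : ℝ)
    {N : ℕ} {Ω : Type*} (mΩ : MeasurableSpace Ω) (Pr : @MeasureTheory.Measure Ω mΩ)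
    (X : ℕ → Ω → (Fin N → E)) (η0N : Rd d → ℝ)
    (q : Measure E × (Rd d → ℝ)) (n : ℕ) : ℝ :=
  ⨆ f : B1 E, ∫ ω,
    (|∫ x, f.1 x ∂(empMeas (X n ω)) - ∫ x, f.1 x ∂q.1| +
      tvDen ℓ (etaSeq ℓ p p' ε X η0N n ω) q.2) ∂Pr

/-- `sup_{f ∈ B1(E)} E(|⟨m̃_n^N - q.1, f⟩| + ‖η̃_n^N - q.2‖_TV)` for the particle scheme. -/
def schemeErr {E : Set (Rd d)} (ℓ : Measure (Rd d)) (p p' : Rd d → Rd d → ℝ) (ε : ℝ)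
    {N : ℕ} {Ω : Type*} (mΩ : MeasurableSpace Ω) (Pr : @MeasureTheory.Measure Ω mΩ)
    (X : ℕ → Ω → (Fin N → E)) (Y : ℕ → Ω → (Fin N → Rd d)) (η0 : Rd d → ℝ)
    (q : Measure E × (Rd d → ℝ)) (n : ℕ) : ℝ :=
  ⨆ f : B1 E, ∫ ω,
    (|∫ x, f.1 x ∂(empMeas (X n ω)) - ∫ x, f.1 x ∂q.1| +
      tvDen ℓ (etaTildeSeq ℓ p p' ε X Y η0 n ω) q.2) ∂Pr


section AuxStmt18

open scoped RealInnerProductSpace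

lemma gauss_integrable_aux {b : ℝ} (hb : 0 < b) :
    Integrable (fun v : Rd d => rexp (-b * ‖v‖ ^ 2)) := by
  have h := (GaussianFourier.integrable_cexp_neg_mul_sq_norm_add
      (V := Rd d) (b := (b : ℂ)) (by simpa using hb) 0 0).re
  refine h.congr (Filter.Eventually.of_forall fun v => ?_)
  have h2 : (-(b:ℂ) * (‖v‖:ℂ) ^ 2 + 0 * (⟪(0 : Rd d), v⟫ : ℝ)) = ((-b * ‖v‖ ^ 2 : ℝ) : ℂ) := by
    push_cast; ring
  simp only [h2, RCLike.re_to_complex, Complex.exp_ofReal_re]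

lemma gauss_integrable {σ : ℝ} (hσ : 0 < σ) (x : Rd d) :
    Integrable (fun y : Rd d =>
      (2 * π * σ ^ 2) ^ (-(d : ℝ) / 2) * rexp (-‖y - x‖ ^ 2 / (2 * σ ^ 2))) := by
  have hb : 0 < (2 * σ ^ 2)⁻¹ := by positivity
  have h1 : Integrable (fun y : Rd d => rexp (-(2 * σ ^ 2)⁻¹ * ‖y - x‖ ^ 2)) := by
    exact (gauss_integrable_aux (d := d) hb).comp_sub_right x
  have h2 : (fun y : Rd d => (2 * π * σ ^ 2) ^ (-(d : ℝ) / 2) * rexp (-‖y - x‖ ^ 2 / (2 * σ ^ 2)))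
      = fun y : Rd d => (2 * π * σ ^ 2) ^ (-(d : ℝ) / 2) * rexp (-(2 * σ ^ 2)⁻¹ * ‖y - x‖ ^ 2) := by
    funext y
    congr 1
    congr 1
    field_simp
  rw [h2]
  exact h1.const_mul _

lemma gauss_integral {σ : ℝ} (hσ : 0 < σ) (x : Rd d) :
    ∫ y : Rd d, (2 * π * σ ^ 2) ^ (-(d : ℝ) / 2) * rexp (-‖y - x‖ ^ 2 / (2 * σ ^ 2)) = 1 := by
  have hb : 0 < (2 * σ ^ 2)⁻¹ := by positivity
  rw [integral_const_mul]
  have h0 : (fun y : Rd d => rexp (-‖y - x‖ ^ 2 / (2 * σ ^ 2)))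
      = fun y : Rd d => rexp (-(2 * σ ^ 2)⁻¹ * ‖y - x‖ ^ 2) := by
    funext y; congr 1; field_simp
  rw [h0]
  rw [integral_sub_right_eq_self (fun v : Rd d => rexp (-(2 * σ ^ 2)⁻¹ * ‖v‖ ^ 2)) x]
  rw [GaussianFourier.integral_rexp_neg_mul_sq_norm hb]
  rw [finrank_euclideanSpace_fin]
  have hπ : π / (2 * σ ^ 2)⁻¹ = 2 * π * σ ^ 2 := by field_simp
  rw [hπ, ← Real.rpow_add (by positivity),
    show (-(d : ℝ) / 2 + (d : ℝ) / 2) = 0 by ring, Real.rpow_zero]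


lemma b1_zero_mem {S : Type*} [MeasurableSpace S] : (fun _ : S => (0:ℝ)) ∈ B1 S :=
  ⟨measurable_const, fun x => by norm_num⟩

instance b1_nonempty {S : Type*} [MeasurableSpace S] : Nonempty (B1 S) := ⟨⟨_, b1_zero_mem⟩⟩

lemma b1_integrable {S : Type*} [MeasurableSpace S] (μ : Measure S) [IsFiniteMeasure μ]
    (f : B1 S) : Integrable (f : S → ℝ) μ :=
  (integrable_const (1:ℝ)).mono' f.2.1.aestronglyMeasurable
    (Filter.Eventually.of_forall fun x => by simpa using f.2.2 x)

lemma b1_integral_abs_le {S : Type*} [MeasurableSpace S] (μ : Measure S)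
    [IsProbabilityMeasure μ] (f : B1 S) : |∫ x, (f : S → ℝ) x ∂μ| ≤ 1 := by
  calc |∫ x, (f : S → ℝ) x ∂μ| ≤ ∫ x, ‖(f : S → ℝ) x‖ ∂μ := by
        rw [← Real.norm_eq_abs]; exact norm_integral_le_integral_norm _
  _ ≤ ∫ _x, (1:ℝ) ∂μ := by
      refine integral_mono (b1_integrable μ f).norm (integrable_const 1) fun x => ?_
      simpa [Real.norm_eq_abs] using f.2.2 x
  _ = 1 := by simp

lemma tv_bddAbove {S : Type*} [MeasurableSpace S] (μ ν : Measure S)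
    [IsProbabilityMeasure μ] [IsProbabilityMeasure ν] :
    BddAbove (Set.range fun f : B1 S => |∫ x, (f : S → ℝ) x ∂μ - ∫ x, (f : S → ℝ) x ∂ν|) := by
  refine ⟨2, ?_⟩
  rintro _ ⟨f, rfl⟩
  have h1 := b1_integral_abs_le μ f
  have h2 := b1_integral_abs_le ν f
  calc |∫ x, (f : S → ℝ) x ∂μ - ∫ x, (f : S → ℝ) x ∂ν|
      ≤ |∫ x, (f : S → ℝ) x ∂μ| + |∫ x, (f : S → ℝ) x ∂ν| := abs_sub _ _
  _ ≤ 2 := by linarith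

lemma tvDist_nonneg' {S : Type*} [MeasurableSpace S] (μ ν : Measure S)
    [IsProbabilityMeasure μ] [IsProbabilityMeasure ν] : 0 ≤ tvDist μ ν := by
  have := le_ciSup (tv_bddAbove μ ν) (⟨_, b1_zero_mem⟩ : B1 S)
  refine le_trans ?_ this
  positivity

end AuxStmt18

theorem tv_contract_aux {d : ℕ} (E : Set (Rd d)) (p' : Rd d → Rd d → ℝ)
    (hcont : Continuous (Function.uncurry p'))
    (hpos : ∀ x y, 0 ≤ p' x y) (C : ℝ)
    (hble : ∀ x y, p' x y ≤ C)
    (hint : ∀ x, Integrable (fun y => p' x y) (volume : Measure (Rd d)))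
    (hint1 : ∀ x, ∫ y, p' x y ∂(volume : Measure (Rd d)) = 1)
    (S : Set (Rd d)) (hSmeas : MeasurableSet S) (hSfin : volume S ≠ ⊤)
    (κ : ℝ) (hκpos : 0 < κ)
    (hmin : ∀ x ∈ E, ∀ y ∈ S, κ ≤ p' x y)
    (δ : ℝ) (hδ : δ = κ * (volume S).toReal) (hδ1 : δ < 1)
    (m m' : Measure E) [IsProbabilityMeasure m] [IsProbabilityMeasure m'] :
    tvDist (measP' volume p' m) (measP' volume p' m') ≤ (1 - δ) * tvDist m m' := by
  have h1δ : 0 < 1 - δ := by linarith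
  -- continuity / measurability of `p'` in various shapes
  have hpE : Continuous (fun q : Rd d × E => p' q.2.1 q.1) :=
    hcont.comp ((continuous_subtype_val.comp continuous_snd).prodMk continuous_fst)
  have hpE2 : Continuous (fun q : E × Rd d => p' q.1.1 q.2) :=
    hcont.comp ((continuous_subtype_val.comp continuous_fst).prodMk continuous_snd)
  -- the indicator function of S
  set ind : Rd d → ℝ := S.indicator (fun _ => (1:ℝ)) with hind_def
  have hind_meas : Measurable ind := measurable_const.indicator hSmeas
  have hind_int : Integrable ind volume := by
    rw [hind_def, integrable_indicator_iff hSmeas]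
    exact integrableOn_const hSfin
  have hind_integral : ∫ y, ind y = (volume S).toReal := by
    simpa [Measure.real] using integral_indicator_const (1:ℝ) hSmeas
  have hind_nonneg : ∀ y, 0 ≤ ind y := fun y => Set.indicator_nonneg (fun _ _ => zero_le_one) y
  -- the residual kernel r
  set r : E → Rd d → ℝ := fun x y => p' x.1 y - κ * ind y with hr_def
  have hr_nonneg : ∀ (x : E) (y : Rd d), 0 ≤ r x y := by
    intro x y
    by_cases hy : y ∈ S
    · have h1 : ind y = 1 := by simp [hind_def, Set.indicator_of_mem hy]
      have := hmin x.1 x.2 y hy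
      simp only [hr_def, h1, mul_one]
      linarith
    · have h1 : ind y = 0 := by simp [hind_def, Set.indicator_of_notMem hy]
      simp only [hr_def, h1, mul_zero, sub_zero]
      exact hpos _ _
  have hr_le : ∀ (x : E) (y : Rd d), r x y ≤ p' x.1 y := by
    intro x y
    have := hind_nonneg y
    simp only [hr_def]
    nlinarith
  have hr_int : ∀ x : E, Integrable (r x) volume :=
    fun x => (hint x.1).sub (hind_int.const_mul κ)
  have hr_integral : ∀ x : E, ∫ y, r x y = 1 - δ := by
    intro x
    simp only [hr_def]
    rw [integral_sub (hint x.1) (hind_int.const_mul κ), hint1, integral_const_mul,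
      hind_integral, hδ]
  have hr_measE : Measurable (fun q : Rd d × E => r q.2 q.1) :=
    hpE.measurable.sub ((hind_meas.comp measurable_fst).const_mul κ)
  have hr_measE2 : Measurable (fun q : E × Rd d => r q.1 q.2) :=
    hpE2.measurable.sub ((hind_meas.comp measurable_snd).const_mul κ)
  -- integrability of x ↦ p' x y
  have hInt1 : ∀ (ν : Measure E), IsProbabilityMeasure ν → ∀ y,
      Integrable (fun x : E => p' x.1 y) ν := by
    intro ν hν y
    haveI := hν
    refine (integrable_const C).mono'
      ((hcont.comp (continuous_subtype_val.prodMk continuous_const)).measurable).aestronglyMeasurable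
      (Filter.Eventually.of_forall fun x => ?_)
    rw [Real.norm_eq_abs, abs_of_nonneg (hpos _ _)]
    exact hble _ _
  have hIntr1 : ∀ (ν : Measure E), IsProbabilityMeasure ν → ∀ y,
      Integrable (fun x : E => r x y) ν := by
    intro ν hν y
    haveI := hν
    exact (hInt1 ν hν y).sub (integrable_const _)
  -- integrability on the product
  have hprodE : ∀ (ν : Measure E), IsProbabilityMeasure ν →
      Integrable (fun q : E × Rd d => p' q.1.1 q.2) (ν.prod volume) := by
    intro ν hν
    haveI := hν
    rw [integrable_prod_iff hpE2.measurable.aestronglyMeasurable]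
    constructor
    · exact Filter.Eventually.of_forall fun x => hint x.1
    · refine (integrable_const (1:ℝ)).congr (Filter.Eventually.of_forall fun x => ?_)
      show (1:ℝ) = ∫ y, ‖p' x.1 y‖ ∂(volume : Measure (Rd d))
      rw [show (∫ y, ‖p' x.1 y‖ ∂(volume : Measure (Rd d)))
          = ∫ y, p' x.1 y ∂(volume : Measure (Rd d)) from
        integral_congr_ae (Filter.Eventually.of_forall fun y => by
          show ‖p' x.1 y‖ = p' x.1 y
          rw [Real.norm_eq_abs, abs_of_nonneg (hpos _ _)]), hint1]
  -- the functions u_ν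
  have hu_sm : ∀ (ν : Measure E), IsProbabilityMeasure ν →
      StronglyMeasurable (fun y => ∫ x : E, p' x.1 y ∂ν) := by
    intro ν hν
    haveI := hν
    exact hpE.measurable.stronglyMeasurable.integral_prod_right'
  have hu_nonneg : ∀ (ν : Measure E) (y : Rd d), 0 ≤ ∫ x : E, p' x.1 y ∂ν :=
    fun ν y => integral_nonneg fun x => hpos _ _
  have hu_int : ∀ (ν : Measure E), IsProbabilityMeasure ν →
      Integrable (fun y => ∫ x : E, p' x.1 y ∂ν) volume := by
    intro ν hν
    haveI := hν
    exact (hprodE ν hν).integral_prod_right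
  -- Dm ν measurability and bound
  have hDm_sm : ∀ (ν : Measure E), IsProbabilityMeasure ν →
      StronglyMeasurable (fun y => ∫ x : E, r x y ∂ν) := by
    intro ν hν
    haveI := hν
    exact hr_measE.stronglyMeasurable.integral_prod_right'
  have hDm_bound : ∀ (ν : Measure E), IsProbabilityMeasure ν → ∀ y,
      |∫ x : E, r x y ∂ν| ≤ ∫ x : E, p' x.1 y ∂ν := by
    intro ν hν y
    haveI := hν
    rw [abs_of_nonneg (integral_nonneg fun x => hr_nonneg x y)]
    exact integral_mono (hIntr1 ν hν y) (hInt1 ν hν y) fun x => hr_le x y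
  -- decomposition u = Dm + κ ind
  have hDm_decomp : ∀ (ν : Measure E), IsProbabilityMeasure ν → ∀ y,
      ∫ x : E, p' x.1 y ∂ν = (∫ x : E, r x y ∂ν) + κ * ind y := by
    intro ν hν y
    haveI := hν
    have h1 : ∀ x : E, p' x.1 y = r x y + κ * ind y := by
      intro x; simp [hr_def]
    rw [integral_congr_ae (Filter.Eventually.of_forall h1),
      integral_add (hIntr1 ν hν y) (integrable_const _), integral_const]
    simp
  -- the sign function
  set D : Rd d → ℝ := fun y => (∫ x : E, r x y ∂m) - (∫ x : E, r x y ∂m') with hD_def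
  have hD_meas : Measurable D :=
    ((hDm_sm m inferInstance).measurable).sub ((hDm_sm m' inferInstance).measurable)
  set sg : Rd d → ℝ := fun y => if 0 ≤ D y then (1:ℝ) else -1 with hsg_def
  have hsg_meas : Measurable sg :=
    Measurable.ite (measurableSet_le measurable_const hD_meas) measurable_const measurable_const
  have hsg_abs : ∀ y, |sg y| = 1 := by
    intro y; by_cases h : 0 ≤ D y <;> simp [hsg_def, h]
  have hsgD : ∀ y, sg y * D y = |D y| := by
    intro y
    by_cases h : 0 ≤ D y
    · simp [hsg_def, h, abs_of_nonneg h]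
    · push_neg at h
      simp [hsg_def, not_le.mpr h, abs_of_neg h]
  -- Fubini for s ⬝ r
  have hrs_prod : ∀ (ν : Measure E), IsProbabilityMeasure ν →
      Integrable (fun q : Rd d × E => sg q.1 * r q.2 q.1) (volume.prod ν) := by
    intro ν hν
    haveI := hν
    refine ((hprodE ν hν).swap).mono'
      ((hsg_meas.comp measurable_fst).mul hr_measE).aestronglyMeasurable
      (Filter.Eventually.of_forall fun q => ?_)
    rw [norm_mul, Real.norm_eq_abs, Real.norm_eq_abs, hsg_abs, one_mul,
      abs_of_nonneg (hr_nonneg _ _)]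
    exact hr_le _ _
  have hswap : ∀ (ν : Measure E), IsProbabilityMeasure ν →
      ∫ y, sg y * (∫ x : E, r x y ∂ν) ∂volume
        = ∫ x : E, (∫ y, sg y * r x y ∂volume) ∂ν := by
    intro ν hν
    haveI := hν
    have h1 : ∀ y, sg y * ∫ x : E, r x y ∂ν = ∫ x : E, sg y * r x y ∂ν :=
      fun y => (integral_const_mul _ _).symm
    simp_rw [h1]
    exact integral_integral_swap (hrs_prod ν hν)
  -- G and its properties
  set G : E → ℝ := fun x => ∫ y, sg y * r x y ∂volume with hG_def
  have hG_meas : Measurable G := by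
    have : StronglyMeasurable (fun q : E × Rd d => sg q.2 * r q.1 q.2) :=
      ((hsg_meas.comp measurable_snd).mul hr_measE2).stronglyMeasurable
    exact this.integral_prod_right'.measurable
  have hG_bound : ∀ x : E, |G x| ≤ 1 - δ := by
    intro x
    calc |G x| ≤ ∫ y, ‖sg y * r x y‖ ∂volume := by
          rw [← Real.norm_eq_abs]; exact norm_integral_le_integral_norm _
    _ = ∫ y, r x y ∂volume := by
          refine integral_congr_ae (Filter.Eventually.of_forall fun y => ?_)
          show ‖sg y * r x y‖ = r x y
          rw [norm_mul, Real.norm_eq_abs, Real.norm_eq_abs, hsg_abs, one_mul,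
            abs_of_nonneg (hr_nonneg _ _)]
    _ = 1 - δ := hr_integral x
  -- integrability of y ↦ sg y * Dm ν y
  have hsDm_int : ∀ (ν : Measure E), IsProbabilityMeasure ν →
      Integrable (fun y => sg y * ∫ x : E, r x y ∂ν) volume := by
    intro ν hν
    haveI := hν
    refine (hu_int ν hν).mono'
      ((hsg_meas.mul (hDm_sm ν hν).measurable).aestronglyMeasurable)
      (Filter.Eventually.of_forall fun y => ?_)
    rw [norm_mul, Real.norm_eq_abs, Real.norm_eq_abs, hsg_abs, one_mul]
    exact hDm_bound ν hν y
  -- Step A : integral against measP'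
  have hStepA : ∀ (ν : Measure E), IsProbabilityMeasure ν → ∀ f : B1 (Rd d),
      ∫ z, (f : Rd d → ℝ) z ∂(measP' volume p' ν)
        = ∫ y, (∫ x : E, p' x.1 y ∂ν) * (f : Rd d → ℝ) y ∂volume := by
    intro ν hν f
    have hmeasnn : Measurable (fun y => Real.toNNReal (∫ x : E, p' x.1 y ∂ν)) :=
      (hu_sm ν hν).measurable.real_toNNReal
    have heq : (fun y => ENNReal.ofReal (∫ x : E, p' x.1 y ∂ν))
        = fun y => ((fun y => Real.toNNReal (∫ x : E, p' x.1 y ∂ν)) y : ℝ≥0∞) := rfl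
    rw [measP', heq, integral_withDensity_eq_integral_smul hmeasnn]
    refine integral_congr_ae (Filter.Eventually.of_forall fun y => ?_)
    show (∫ x : E, p' x.1 y ∂ν).toNNReal • (f : Rd d → ℝ) y
        = (∫ x : E, p' x.1 y ∂ν) * (f : Rd d → ℝ) y
    rw [NNReal.smul_def, Real.coe_toNNReal _ (hu_nonneg ν y), smul_eq_mul]
  -- Step B
  have hStepB : ∀ f : B1 (Rd d),
      |∫ z, (f : Rd d → ℝ) z ∂(measP' volume p' m)
        - ∫ z, (f : Rd d → ℝ) z ∂(measP' volume p' m')|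
      ≤ ∫ y, |(∫ x : E, p' x.1 y ∂m) - (∫ x : E, p' x.1 y ∂m')| ∂volume := by
    intro f
    rw [hStepA m inferInstance f, hStepA m' inferInstance f]
    have hif : ∀ (ν : Measure E), IsProbabilityMeasure ν →
        Integrable (fun y => (∫ x : E, p' x.1 y ∂ν) * (f : Rd d → ℝ) y) volume := by
      intro ν hν
      haveI := hν
      refine (hu_int ν hν).mono'
        (((hu_sm ν hν).measurable.mul f.2.1).aestronglyMeasurable)
        (Filter.Eventually.of_forall fun y => ?_)
      rw [norm_mul, Real.norm_eq_abs, Real.norm_eq_abs, abs_of_nonneg (hu_nonneg ν y)]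
      calc (∫ x : E, p' x.1 y ∂ν) * |(f : Rd d → ℝ) y|
          ≤ (∫ x : E, p' x.1 y ∂ν) * 1 := by
            have := f.2.2 y
            have := hu_nonneg ν y
            nlinarith
      _ = _ := mul_one _
    rw [← integral_sub (hif m inferInstance) (hif m' inferInstance)]
    calc |∫ y, ((∫ x : E, p' x.1 y ∂m) * (f : Rd d → ℝ) y
            - (∫ x : E, p' x.1 y ∂m') * (f : Rd d → ℝ) y) ∂volume|
        ≤ ∫ y, ‖(∫ x : E, p' x.1 y ∂m) * (f : Rd d → ℝ) y
            - (∫ x : E, p' x.1 y ∂m') * (f : Rd d → ℝ) y‖ ∂volume := by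
          rw [← Real.norm_eq_abs]; exact norm_integral_le_integral_norm _
    _ ≤ ∫ y, |(∫ x : E, p' x.1 y ∂m) - (∫ x : E, p' x.1 y ∂m')| ∂volume := by
          refine integral_mono ((hif m inferInstance).sub (hif m' inferInstance)).norm
            ((hu_int m inferInstance).sub (hu_int m' inferInstance)).abs
            fun y => ?_
          rw [Real.norm_eq_abs, ← sub_mul, abs_mul]
          calc |(∫ x : E, p' x.1 y ∂m) - (∫ x : E, p' x.1 y ∂m')| * |(f : Rd d → ℝ) y|
              ≤ |(∫ x : E, p' x.1 y ∂m) - (∫ x : E, p' x.1 y ∂m')| * 1 := by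
                have := f.2.2 y
                have := abs_nonneg ((∫ x : E, p' x.1 y ∂m) - (∫ x : E, p' x.1 y ∂m'))
                nlinarith
          _ = _ := mul_one _
  -- Step C : the key bound on ∫ |u - u'|
  have hStepC : ∫ y, |(∫ x : E, p' x.1 y ∂m) - (∫ x : E, p' x.1 y ∂m')| ∂volume
      ≤ (1 - δ) * tvDist m m' := by
    have hDrw : ∀ y, (∫ x : E, p' x.1 y ∂m) - (∫ x : E, p' x.1 y ∂m') = D y := by
      intro y
      rw [hDm_decomp m inferInstance y, hDm_decomp m' inferInstance y]
      simp [hD_def]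
    have h1 : ∫ y, |(∫ x : E, p' x.1 y ∂m) - (∫ x : E, p' x.1 y ∂m')| ∂volume
        = ∫ y, sg y * D y ∂volume := by
      refine integral_congr_ae (Filter.Eventually.of_forall fun y => ?_)
      show |(∫ x : E, p' x.1 y ∂m) - (∫ x : E, p' x.1 y ∂m')| = sg y * D y
      rw [hDrw y, ← hsgD y]
    have h2 : ∫ y, sg y * D y ∂volume
        = (∫ y, sg y * (∫ x : E, r x y ∂m) ∂volume)
          - ∫ y, sg y * (∫ x : E, r x y ∂m') ∂volume := by
      rw [← integral_sub (hsDm_int m inferInstance) (hsDm_int m' inferInstance)]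
      refine integral_congr_ae (Filter.Eventually.of_forall fun y => ?_)
      simp [hD_def, mul_sub]
    have h3 : ∫ y, sg y * D y ∂volume = (∫ x : E, G x ∂m) - ∫ x : E, G x ∂m' := by
      rw [h2, hswap m inferInstance, hswap m' inferInstance]
    -- the test function f₀
    set f₀ : E → ℝ := fun x => (1 - δ)⁻¹ * G x with hf₀_def
    have hf₀B1 : f₀ ∈ B1 E := by
      constructor
      · exact hG_meas.const_mul _
      · intro x
        rw [hf₀_def]
        simp only
        rw [abs_mul, abs_of_nonneg (inv_nonneg.mpr h1δ.le)]
        rw [inv_mul_le_iff₀ h1δ, mul_one]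
        exact hG_bound x
    have h4 : (∫ x : E, G x ∂m) - ∫ x : E, G x ∂m'
        = (1 - δ) * ((∫ x : E, f₀ x ∂m) - ∫ x : E, f₀ x ∂m') := by
      simp only [hf₀_def]
      rw [integral_const_mul, integral_const_mul]
      field_simp
    have h5 : (∫ x : E, f₀ x ∂m) - (∫ x : E, f₀ x ∂m') ≤ tvDist m m' := by
      refine le_trans (le_abs_self _) ?_
      exact le_ciSup (tv_bddAbove m m') (⟨f₀, hf₀B1⟩ : B1 E)
    rw [h1, h3, h4]
    exact mul_le_mul_of_nonneg_left h5 h1δ.le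
  -- conclusion
  refine ciSup_le fun f => ?_
  exact le_trans (hStepB f) hStepC

/-- **Lemma**: a Gaussian kernel `P'` is a TV-contraction on `P(E)` (Assumption (AG) implies (AP)(1)). -/
theorem stmt18 {d : ℕ}
    (E : Set (Rd d)) (hEc : IsCompact E) (hEi : (interior E).Nonempty)
    (hEm : MeasurableSet E)
    (p' : Rd d → Rd d → ℝ) (hgp' : IsGaussianKernelDensity p') :
    ∃ β : ℝ, β ∈ Set.Ioo (0 : ℝ) 1 ∧
      ∀ m m' : Measure E, IsProbabilityMeasure m → IsProbabilityMeasure m' →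
        tvDist (measP' volume p' m) (measP' volume p' m') ≤ β * tvDist m m'  := by
  classical
  obtain ⟨σ, hσ, hp⟩ := hgp'
  set C : ℝ := (2 * π * σ ^ 2) ^ (-(d : ℝ) / 2) with hC
  have hCpos : 0 < C := Real.rpow_pos_of_pos (by positivity) _
  have hpos : ∀ x y, 0 ≤ p' x y := fun x y => by
    rw [hp]; positivity
  have hble : ∀ x y, p' x y ≤ C := by
    intro x y
    rw [hp]
    have h1 : rexp (-‖y - x‖ ^ 2 / (2 * σ ^ 2)) ≤ 1 := by
      rw [Real.exp_le_one_iff]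
      apply div_nonpos_of_nonpos_of_nonneg
      · simpa using sq_nonneg ‖y - x‖
      · positivity
    nlinarith
  have hcont : Continuous (Function.uncurry p') := by
    have h0 : Function.uncurry p'
        = fun q : Rd d × Rd d => C * rexp (-‖q.2 - q.1‖ ^ 2 / (2 * σ ^ 2)) :=
      funext fun q => hp q.1 q.2
    rw [h0]
    fun_prop
  have hint : ∀ x, Integrable (fun y => p' x y) (volume : Measure (Rd d)) := by
    intro x
    have h0 : (fun y : Rd d => p' x y)
        = fun y : Rd d => C * rexp (-‖y - x‖ ^ 2 / (2 * σ ^ 2)) := funext fun y => hp x y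
    rw [h0]
    exact gauss_integrable hσ x
  have hint1 : ∀ x, ∫ y, p' x y ∂(volume : Measure (Rd d)) = 1 := by
    intro x
    calc ∫ y, p' x y ∂(volume : Measure (Rd d))
        = ∫ y, C * rexp (-‖y - x‖ ^ 2 / (2 * σ ^ 2)) ∂(volume : Measure (Rd d)) :=
          integral_congr_ae (Filter.Eventually.of_forall fun y => hp x y)
    _ = 1 := gauss_integral hσ x
  obtain ⟨R, hR1, hER⟩ := hEc.isBounded.subset_closedBall_lt 1 0
  set S : Set (Rd d) := Metric.closedBall (0 : Rd d) R with hS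
  have hSmeas : MeasurableSet S := measurableSet_closedBall
  have hSfin : volume S ≠ ⊤ := ((isCompact_closedBall _ _).measure_lt_top).ne
  have hSpos : 0 < volume S := Metric.measure_closedBall_pos volume 0 (by linarith)
  have hvS : 0 < (volume S).toReal := ENNReal.toReal_pos hSpos.ne' hSfin
  set c : ℝ := C * rexp (-(2 * R) ^ 2 / (2 * σ ^ 2)) with hcdef
  have hcpos : 0 < c := by positivity
  have hminc : ∀ x ∈ E, ∀ y ∈ S, c ≤ p' x y := by
    intro x hx y hy
    have hxR : ‖x‖ ≤ R := mem_closedBall_zero_iff.mp (hER hx)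
    have hyR : ‖y‖ ≤ R := mem_closedBall_zero_iff.mp hy
    have hnorm : ‖y - x‖ ≤ 2 * R := (norm_sub_le _ _).trans (by linarith)
    have hsq : ‖y - x‖ ^ 2 ≤ (2 * R) ^ 2 := by nlinarith [norm_nonneg (y - x)]
    have hexp : rexp (-(2 * R) ^ 2 / (2 * σ ^ 2)) ≤ rexp (-‖y - x‖ ^ 2 / (2 * σ ^ 2)) := by
      rw [Real.exp_le_exp]
      apply div_le_div_of_nonneg_right ?_ ?_ |>.trans_eq rfl
      · linarith
      · positivity
    rw [hp]
    exact mul_le_mul_of_nonneg_left hexp hCpos.le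
  have hcvS : c * (volume S).toReal ≤ 1 := by
    obtain ⟨x₀, hx₀i⟩ := hEi
    have hx₀ : x₀ ∈ E := interior_subset hx₀i
    calc c * (volume S).toReal = ∫ _ in S, c ∂(volume : Measure (Rd d)) := by
          rw [setIntegral_const, smul_eq_mul, mul_comm]; rfl
    _ ≤ ∫ y in S, p' x₀ y ∂(volume : Measure (Rd d)) := by
          refine setIntegral_mono_on (integrableOn_const hSfin)
            ((hint x₀).integrableOn) hSmeas fun y hy => hminc x₀ hx₀ y hy
    _ ≤ ∫ y, p' x₀ y ∂(volume : Measure (Rd d)) :=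
          setIntegral_le_integral (hint x₀) (Filter.Eventually.of_forall fun y => hpos _ _)
    _ = 1 := hint1 x₀
  set δ : ℝ := (c / 2) * (volume S).toReal with hδdef
  have hδpos : 0 < δ := by positivity
  have hδhalf : δ ≤ 1 / 2 := by
    rw [hδdef]
    nlinarith
  refine ⟨1 - δ, ⟨by linarith, by linarith⟩, fun m m' hm hm' => ?_⟩
  haveI := hm; haveI := hm'
  exact tv_contract_aux E p' hcont hpos C hble hint hint1 S hSmeas hSfin (c / 2)
    (by positivity) (fun x hx y hy => le_trans (by linarith) (hminc x hx y hy))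
    δ hδdef (by linarith) m m'
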